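/- Let Σ ≤ H be a subgroup satisfying: (i) Σ has infinite index in H; (ii) Σ is icc relative to H, i.e. every non-trivial σ ∈ Σ has infinite H-conjugacy class; (iii) for every non-trivial h ∈ H, the set Σ ∩ Cl_H(h) of elements of Σ conjugate in H to h is finite. Then for all n ≥ 1, all x₁,…,xₙ ∈ H \ {1}, and every finite F ⊂ H, the set {h ∈ H : h·xᵢ ∉ ΣF for all i and h·xᵢ·h⁻¹ ∉ Σ for all i} contains infinitely many left Σ-classes (in particular, Σ is highly core-free). -/
import Mathlib

open scoped Pointwise

/-- The set ΣF = {σf : σ ∈ Σ, f ∈ F}. -/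
def cosetProd {H : Type*} [Group H] (A : Subgroup H) (F : Set H) : Set H :=
  {h | ∃ σ ∈ A, ∃ f ∈ F, h = σ * f}

/-- A subgroup `A ≤ H` is highly core-free if for every finite `F ⊆ H`, every `n ≥ 1`
and all nonempty `S₁, …, Sₙ ⊆ H` covering `H \ ΣF`, some `Sₖ` has trivial core
`⋂_{h ∈ Sₖ} h⁻¹ A h = {1}`. -/
def HighlyCoreFree {H : Type*} [Group H] (A : Subgroup H) : Prop :=
  ∀ F : Set H, F.Finite → ∀ n : ℕ, 1 ≤ n → ∀ S : Fin n → Set H,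
    (∀ k, (S k).Nonempty) → (∀ h : H, h ∉ cosetProd A F → ∃ k, h ∈ S k) →
    ∃ k, ∀ x : H, (∀ h ∈ S k, h * x * h⁻¹ ∈ A) → x = 1

lemma idx_conj {H : Type*} [Group H] (A : Subgroup H) (c : H) :
    (A.map (MulAut.conj c⁻¹).toMonoidHom).index = A.index := by
  apply Subgroup.index_map_eq
  · exact (MulAut.conj c⁻¹).surjective
  · have hk : ((MulAut.conj c⁻¹).toMonoidHom).ker = ⊥ :=
      (MonoidHom.ker_eq_bot_iff _).mpr (MulAut.conj c⁻¹).injective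
    rw [hk]; exact bot_le

lemma rc_mem {H : Type*} [Group H] (A : Subgroup H) (c h : H) :
    h ∈ c • ((A.map (MulAut.conj c⁻¹).toMonoidHom : Subgroup H) : Set H) ↔
      ∃ σ ∈ A, h = σ * c := by
  rw [Set.mem_smul_set]
  constructor
  · rintro ⟨y, ⟨a, ha, rfl⟩, rfl⟩
    refine ⟨a, ha, ?_⟩
    simp only [MulAut.conj_apply, smul_eq_mul, MulEquiv.coe_toMonoidHom]
    group
  · rintro ⟨σ, hσ, rfl⟩
    refine ⟨c⁻¹ * σ * c, ⟨σ, hσ, ?_⟩, ?_⟩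
    · simp only [MulAut.conj_apply, MulEquiv.coe_toMonoidHom]
      group
    · simp only [smul_eq_mul]; group

lemma cent_idx {H : Type*} [Group H] (x : H)
    (hx : Set.Infinite {g : H | ∃ t : H, g = t * x * t⁻¹}) :
    (Subgroup.centralizer {x}).index = 0 := by
  have hinf : Infinite (H ⧸ Subgroup.centralizer ({x} : Set H)) := by
    have h1 : Infinite {g : H | ∃ t : H, g = t * x * t⁻¹} := hx.to_subtype
    refine Infinite.of_injective
      (fun g : {g : H | ∃ t : H, g = t * x * t⁻¹} =>
        (QuotientGroup.mk g.2.choose : H ⧸ Subgroup.centralizer ({x} : Set H))) ?_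
    rintro ⟨g, hg⟩ ⟨g', hg'⟩ hq
    have h2 := hg.choose_spec
    have h3 := hg'.choose_spec
    set t := hg.choose
    set t' := hg'.choose
    rw [QuotientGroup.eq] at hq
    have hc : x * (t⁻¹ * t') = (t⁻¹ * t') * x :=
      Subgroup.mem_centralizer_iff.mp hq x rfl
    have hrw : t' * x * t'⁻¹ = t * x * t⁻¹ := by
      calc t' * x * t'⁻¹ = t * ((t⁻¹ * t') * x * (t⁻¹ * t')⁻¹) * t⁻¹ := by group
        _ = t * (x * (t⁻¹ * t') * (t⁻¹ * t')⁻¹) * t⁻¹ := by rw [← hc]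
        _ = t * x * t⁻¹ := by group
    simpa using h2.trans ((hrw.symm.trans h3.symm))
  exact Nat.card_eq_zero_of_infinite

theorem hcf_criterion {H : Type*} [Group H] (A : Subgroup H)
    (hindex : A.index = 0)
    (hicc : ∀ σ : H, σ ∈ A → σ ≠ 1 → Set.Infinite {g : H | ∃ t : H, g = t * σ * t⁻¹})
    (hfin : ∀ h : H, h ≠ 1 → Set.Finite {σ : H | σ ∈ A ∧ ∃ t : H, σ = t * h * t⁻¹}) :
    (∀ n : ℕ, 1 ≤ n → ∀ x : Fin n → H, (∀ i, x i ≠ 1) → ∀ F : Set H, F.Finite →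
      Set.Infinite
        ((fun h : H => {g : H | ∃ σ ∈ A, g = σ * h}) ''
          {h : H | (∀ i, h * x i ∉ cosetProd A F) ∧ (∀ i, h * x i * h⁻¹ ∉ A)}))
    ∧ HighlyCoreFree A := by
  classical
  have main : ∀ n : ℕ, 1 ≤ n → ∀ x : Fin n → H, (∀ i, x i ≠ 1) → ∀ F : Set H, F.Finite →
      Set.Infinite
        ((fun h : H => {g : H | ∃ σ ∈ A, g = σ * h}) ''
          {h : H | (∀ i, h * x i ∉ cosetProd A F) ∧ (∀ i, h * x i * h⁻¹ ∉ A)}) := by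
    intro n hn x hx F hF
    by_contra hcon
    rw [Set.not_infinite] at hcon
    set Φ : H → Set H := fun h => {g : H | ∃ σ ∈ A, g = σ * h} with hΦ
    set K : Set H := {h | (∀ i, h * x i ∉ cosetProd A F) ∧ (∀ i, h * x i * h⁻¹ ∉ A)} with hKdef
    set D : H → Subgroup H := fun c => A.map (MulAut.conj c⁻¹).toMonoidHom with hD
    set rep : Set H → H := fun C => if hC : C ∈ Φ '' K then hC.choose else 1 with hrep
    have hrep_spec : ∀ C (hC : C ∈ Φ '' K), rep C ∈ K ∧ Φ (rep C) = C := by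
      intro C hC
      simp only [hrep, dif_pos hC]
      exact hC.choose_spec
    set tt : Fin n → H → H :=
      fun i σ => if h : ∃ t : H, σ = t * x i * t⁻¹ then h.choose else 1 with htt
    have htt_spec : ∀ i σ, (∃ t : H, σ = t * x i * t⁻¹) → σ = tt i σ * x i * (tt i σ)⁻¹ := by
      intro i σ hex
      simp only [htt, dif_pos hex]
      exact hex.choose_spec
    set s₁ : Finset (H × Subgroup H) := hcon.toFinset.image (fun C => (rep C, D (rep C)))
      with hs₁
    set s₂ : Finset (H × Subgroup H) :=
      (hF.toFinset ×ˢ (Finset.univ : Finset (Fin n))).image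
        (fun p => (p.1 * (x p.2)⁻¹, D (p.1 * (x p.2)⁻¹))) with hs₂
    set s₃ : Finset (H × Subgroup H) :=
      (Finset.univ : Finset (Fin n)).biUnion (fun i =>
        ((hfin (x i) (hx i)).toFinset).image
          (fun σ => (tt i σ, Subgroup.centralizer ({x i} : Set H)))) with hs₃
    have hcover : ⋃ p ∈ (s₁ ∪ s₂ ∪ s₃), p.1 • ((p.2 : Subgroup H) : Set H) = Set.univ := by
      apply Set.eq_univ_of_forall
      intro h
      rw [Set.mem_iUnion₂]
      by_cases hhK : h ∈ K
      · have hmem : Φ h ∈ Φ '' K := ⟨h, hhK, rfl⟩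
        obtain ⟨-, hΦeq⟩ := hrep_spec (Φ h) hmem
        refine ⟨(rep (Φ h), D (rep (Φ h))), ?_, ?_⟩
        · refine Finset.mem_union_left _ (Finset.mem_union_left _ ?_)
          exact Finset.mem_image.mpr ⟨Φ h, hcon.mem_toFinset.mpr hmem, rfl⟩
        · have hself : h ∈ Φ h := ⟨1, A.one_mem, (one_mul h).symm⟩
          rw [← hΦeq] at hself
          exact (rc_mem A (rep (Φ h)) h).mpr hself
      · by_cases hc1 : ∃ i, h * x i ∈ cosetProd A F
        · obtain ⟨i, σ, hσ, f, hf, heq⟩ := hc1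
          refine ⟨(f * (x i)⁻¹, D (f * (x i)⁻¹)), ?_, ?_⟩
          · refine Finset.mem_union_left _ (Finset.mem_union_right _ ?_)
            exact Finset.mem_image.mpr
              ⟨(f, i), Finset.mem_product.mpr ⟨hF.mem_toFinset.mpr hf, Finset.mem_univ i⟩, rfl⟩
          · refine (rc_mem A (f * (x i)⁻¹) h).mpr ⟨σ, hσ, ?_⟩
            have : h = h * x i * (x i)⁻¹ := by group
            rw [this, heq]; group
        · have h2 : ∃ i, h * x i * h⁻¹ ∈ A := by
            by_contra h3
            push_neg at h3
            push_neg at hc1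
            exact hhK ⟨hc1, h3⟩
          obtain ⟨i, hσA⟩ := h2
          set σ := h * x i * h⁻¹ with hσdef
          have hex : ∃ t : H, σ = t * x i * t⁻¹ := ⟨h, rfl⟩
          have hts := htt_spec i σ hex
          set t := tt i σ with ht
          refine ⟨(t, Subgroup.centralizer ({x i} : Set H)), ?_, ?_⟩
          · refine Finset.mem_union_right _ ?_
            refine Finset.mem_biUnion.mpr ⟨i, Finset.mem_univ i, ?_⟩
            exact Finset.mem_image.mpr
              ⟨σ, (hfin (x i) (hx i)).mem_toFinset.mpr ⟨hσA, h, rfl⟩, rfl⟩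
          · rw [Set.mem_smul_set]
            refine ⟨t⁻¹ * h, ?_, by simp only [smul_eq_mul]; group⟩
            refine SetLike.mem_coe.mpr (Subgroup.mem_centralizer_iff.mpr ?_)
            intro y hy
            rw [Set.mem_singleton_iff] at hy
            subst hy
            have key : t * x i * t⁻¹ = h * x i * h⁻¹ := hts.symm
            calc x i * (t⁻¹ * h) = t⁻¹ * (t * x i * t⁻¹) * h := by group
              _ = t⁻¹ * (h * x i * h⁻¹) * h := by rw [key]
              _ = (t⁻¹ * h) * x i := by group
    obtain ⟨p, hp, hfi⟩ := Subgroup.exists_finiteIndex_of_leftCoset_cover hcover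
    have hidx := hfi.index_ne_zero
    rcases Finset.mem_union.mp hp with hp' | hp3
    · rcases Finset.mem_union.mp hp' with hp1 | hp2
      · obtain ⟨C, -, rfl⟩ := Finset.mem_image.mp hp1
        exact hidx ((idx_conj A (rep C)).trans hindex)
      · obtain ⟨q, -, rfl⟩ := Finset.mem_image.mp hp2
        exact hidx ((idx_conj A (q.1 * (x q.2)⁻¹)).trans hindex)
    · obtain ⟨i, -, hmem⟩ := Finset.mem_biUnion.mp hp3
      obtain ⟨σ, hσmem, rfl⟩ := Finset.mem_image.mp hmem
      obtain ⟨hσA, u, hu⟩ := (hfin (x i) (hx i)).mem_toFinset.mp hσmem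
      have hσ1 : σ ≠ 1 := by
        rintro rfl
        apply hx i
        have : x i = u⁻¹ * (u * x i * u⁻¹) * u := by group
        rw [this, ← hu]; group
      have hinf : Set.Infinite {g : H | ∃ t : H, g = t * x i * t⁻¹} := by
        refine (hicc σ hσA hσ1).mono ?_
        rintro g ⟨v, rfl⟩
        refine ⟨v * u, ?_⟩
        rw [hu]; group
      exact hidx (cent_idx (x i) hinf)
  refine ⟨main, ?_⟩
  intro F hF n hn S hSne hScov
  by_contra hcon
  push_neg at hcon
  choose x hxA hx1 using hcon
  have i0 : Fin n := ⟨0, hn⟩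
  obtain ⟨C, hC⟩ :=
    (main n hn x hx1 ((fun f => f * x i0) '' F) (hF.image _)).nonempty
  obtain ⟨h, ⟨h1, h2⟩, rfl⟩ := hC
  have hhF : h ∉ cosetProd A F := by
    rintro ⟨σ, hσ, f, hf, rfl⟩
    exact h1 i0 ⟨σ, hσ, f * x i0, ⟨f, hf, rfl⟩, by group⟩
  obtain ⟨k, hk⟩ := hScov h hhF
  exact h2 k (hxA k h hk)
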